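/- Let f1, f2 : S → ℝ be continuous on a nonempty compact set S with f2 strictly positive, and F(η) = max_{x ∈ S} (f1(x) − η·f2(x)). Then F(η*) = 0 holds if and only if η* = max_{x ∈ S} f1(x)/f2(x). -/

import Mathlib

/-- Dinkelbach's theorem: with f1, f2 continuous on a nonempty compact set S and
f2 > 0 on S, F(η*) = 0 iff η* is the maximum of the ratio f1/f2 over S. -/
theorem stmt_1 {E : Type*} [TopologicalSpace E] (S : Set E) (hS : IsCompact S)
    (hne : S.Nonempty) (f1 f2 : E → ℝ)
    (hf1 : ContinuousOn f1 S) (hf2 : ContinuousOn f2 S)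
    (hf2pos : ∀ x ∈ S, 0 < f2 x) (η : ℝ) :
    sSup ((fun x => f1 x - η * f2 x) '' S) = 0 ↔
      η = sSup ((fun x => f1 x / f2 x) '' S) := by
  obtain ⟨a, haS, ha1, ha2⟩ := hS.exists_sSup_image_eq_and_ge hne
    (show ContinuousOn (fun x => f1 x - η * f2 x) S from
      hf1.sub (continuousOn_const.mul hf2))
  obtain ⟨b, hbS, hb1, hb2⟩ := hS.exists_sSup_image_eq_and_ge hne
    (show ContinuousOn (fun x => f1 x / f2 x) S from
      hf1.div hf2 fun x hx => (hf2pos x hx).ne')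
  constructor
  · intro h
    rw [hb1]
    have hga : f1 a - η * f2 a = 0 := by rw [← ha1, h]
    have hηa : η = f1 a / f2 a := by
      field_simp [(hf2pos a haS).ne']
      linarith
    have hle : f1 b / f2 b ≤ η := by
      have hgb : f1 b - η * f2 b ≤ 0 := by
        have := ha2 b hbS; linarith
      rw [div_le_iff₀ (hf2pos b hbS)]
      linarith
    have hge : η ≤ f1 b / f2 b := hηa ▸ hb2 a haS
    linarith
  · intro h
    rw [ha1]
    have hgb : f1 b - η * f2 b = 0 := by
      have : η = f1 b / f2 b := by rw [h, hb1]
      rw [this]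
      field_simp [(hf2pos b hbS).ne']
      ring
    have hle : f1 a - η * f2 a ≤ 0 := by
      have hra : f1 a / f2 a ≤ η := by rw [h, hb1]; exact hb2 a haS
      rw [div_le_iff₀ (hf2pos a haS)] at hra
      linarith
    have hge : f1 b - η * f2 b ≤ f1 a - η * f2 a := ha2 b hbS
    linarith
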